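/- Let P* be a probability distribution on A × A (A finite) satisfying Akin's stationarity condition for TFT of player 1: Σ_{(i,j)} P*(i,j) (δ_{σ,j} - δ_{σ,i}) = 0 for all σ ∈ A. If the stage game is a symmetric potential game (so (s_1(i,j)-s_1(j,i))/2 = c(j)-c(i) for some c), then the expected payoffs under P* are equal: Σ_{(i,j)} s_1(i,j) P*(i,j) = Σ_{(i,j)} s_2(i,j) P*(i,j). -/
import Mathlib


/-- If `P*` satisfies Akin's condition for TFT and the symmetric stage game is a
potential game, then the expected payoffs of the two players under `P*` are equal. -/
theorem stmt6 {M : ℕ} (s1 s2 : Fin M × Fin M → ℝ)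
    (hsym : ∀ i j, s2 (i, j) = s1 (j, i))
    (c : Fin M → ℝ)
    (hc : ∀ i j, (s1 (i, j) - s1 (j, i)) / 2 = c j - c i)
    (Pstar : Fin M × Fin M → ℝ)
    (hpos : ∀ σ, 0 ≤ Pstar σ) (hsum : ∑ σ : Fin M × Fin M, Pstar σ = 1)
    (hAkin : ∀ σa : Fin M, ∑ σ : Fin M × Fin M,
      Pstar σ * ((if σa = σ.2 then (1 : ℝ) else 0) - (if σa = σ.1 then 1 else 0)) = 0) :
    ∑ σ : Fin M × Fin M, s1 σ * Pstar σ = ∑ σ : Fin M × Fin M, s2 σ * Pstar σ := by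
  have key : ∑ σ : Fin M × Fin M, Pstar σ * (c σ.2 - c σ.1) = 0 := by
    have h1 : ∑ σ : Fin M × Fin M, Pstar σ * (c σ.2 - c σ.1)
        = ∑ a : Fin M, c a * ∑ σ : Fin M × Fin M,
          Pstar σ * ((if a = σ.2 then (1 : ℝ) else 0) - (if a = σ.1 then 1 else 0)) := by
      simp_rw [Finset.mul_sum]
      rw [Finset.sum_comm]
      refine Finset.sum_congr rfl fun σ _ => ?_
      have : ∑ a : Fin M, c a * (Pstar σ * ((if a = σ.2 then (1:ℝ) else 0) - (if a = σ.1 then 1 else 0)))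
          = ∑ a : Fin M, (Pstar σ * ((if a = σ.2 then c a else 0) - (if a = σ.1 then c a else 0))) := by
        refine Finset.sum_congr rfl fun a _ => ?_
        by_cases h2 : a = σ.2 <;> by_cases h3 : a = σ.1 <;> simp [h2, h3] <;> split_ifs <;> ring_nf <;> simp_all
      rw [this]
      simp [Finset.mul_sum, mul_sub, Finset.sum_sub_distrib, Finset.sum_ite_eq']
      try ring
    rw [h1]
    simp [hAkin]
  have hd : ∀ σ : Fin M × Fin M, s1 σ - s2 σ = 2 * (c σ.2 - c σ.1) := by
    intro ⟨i, j⟩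
    have := hc i j
    have h2 := hsym i j
    simp at *
    linarith
  have : ∑ σ : Fin M × Fin M, s1 σ * Pstar σ - ∑ σ : Fin M × Fin M, s2 σ * Pstar σ = 0 := by
    rw [← Finset.sum_sub_distrib]
    have : ∀ σ : Fin M × Fin M, s1 σ * Pstar σ - s2 σ * Pstar σ = 2 * (Pstar σ * (c σ.2 - c σ.1)) := by
      intro σ
      rw [show s1 σ * Pstar σ - s2 σ * Pstar σ = (s1 σ - s2 σ) * Pstar σ from by ring, hd σ]
      ring
    simp_rw [this, ← Finset.mul_sum, key, mul_zero]
  linarith
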